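/- Let u, v, w : ℝ² → ℝ be smooth functions of (x, t). Set G_u = −3u, G_v = 0, G_w = −1/2 (the variational derivatives of the density −3u²/2 − w/2 with respect to u, v, w). Then the matrix differential operator (0, −2u, −D_t − 2v; 2u, D_t, −12u² − 2w; −D_t + 2v, 12u² + 2w, 8uD_t + 4u_t) applied to the column (G_u, G_v, G_w) equals the column (v, w, ∂_t u − 6uv). Consequently, (u, v, w) satisfies the first-order KdV system u_x = v, v_x = w, w_x = u_t − 6uv if and only if (∂_x u, ∂_x v, ∂_x w) equals this matrix operator applied to (G_u, G_v, G_w). (This is the second Hamiltonian form of the KdV equation rewritten as a non-evolution system with x as the evolution variable.) -/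

import Mathlib

/-- Partial derivative in the first variable (x) of a function of `(x, t)`. -/
noncomputable def pdx (f : ℝ × ℝ → ℝ) : ℝ × ℝ → ℝ :=
  fun p => fderiv ℝ f p (1, 0)

/-- Partial derivative in the second variable (t) of a function of `(x, t)`. -/
noncomputable def pdt (f : ℝ × ℝ → ℝ) : ℝ × ℝ → ℝ :=
  fun p => fderiv ℝ f p (0, 1)

lemma pdt_const (c : ℝ) (p : ℝ × ℝ) : pdt (fun _ => c) p = 0 := by
  simp [pdt]

lemma pdt_neg3 (u : ℝ × ℝ → ℝ) (hu : ContDiff ℝ (⊤ : ℕ∞) u) (p : ℝ × ℝ) :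
    pdt (fun q => -(3 * u q)) p = -(3 * pdt u p) := by
  have hd : DifferentiableAt ℝ u p := (hu.differentiable (by simp)) p
  simp [pdt, fderiv_fun_neg, fderiv_const_mul hd]

/-- The second Hamiltonian form of the KdV equation written as the non-evolution
first-order system `u_x = v, v_x = w, w_x = u_t − 6uv`. -/
theorem kdv_second_hamiltonian_form_x_evolution
    (u v w : ℝ × ℝ → ℝ)
    (hu : ContDiff ℝ (⊤ : ℕ∞) u) (hv : ContDiff ℝ (⊤ : ℕ∞) v)
    (hw : ContDiff ℝ (⊤ : ℕ∞) w)
    (Gu Gv Gw : ℝ × ℝ → ℝ)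
    (hGu : Gu = fun p => -(3 * u p))
    (hGv : Gv = fun _ => 0)
    (hGw : Gw = fun _ => -(1 / 2)) :
    (∀ p : ℝ × ℝ,
        (0 * Gu p + (-(2 * u p)) * Gv p + (-(pdt Gw p) - 2 * v p * Gw p) = v p)
      ∧ (2 * u p * Gu p + pdt Gv p + (-(12 * u p ^ 2) - 2 * w p) * Gw p = w p)
      ∧ ((-(pdt Gu p) + 2 * v p * Gu p) + (12 * u p ^ 2 + 2 * w p) * Gv p
          + (8 * u p * pdt Gw p + 4 * pdt u p * Gw p) = pdt u p - 6 * u p * v p))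
    ∧ ((∀ p : ℝ × ℝ,
          pdx u p = v p ∧ pdx v p = w p ∧ pdx w p = pdt u p - 6 * u p * v p)
      ↔ (∀ p : ℝ × ℝ,
          pdx u p = 0 * Gu p + (-(2 * u p)) * Gv p + (-(pdt Gw p) - 2 * v p * Gw p)
        ∧ pdx v p = 2 * u p * Gu p + pdt Gv p + (-(12 * u p ^ 2) - 2 * w p) * Gw p
        ∧ pdx w p = (-(pdt Gu p) + 2 * v p * Gu p) + (12 * u p ^ 2 + 2 * w p) * Gv p
            + (8 * u p * pdt Gw p + 4 * pdt u p * Gw p))) := by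
  subst hGu hGv hGw
  have key : ∀ p : ℝ × ℝ,
      (0 * -(3 * u p) + (-(2 * u p)) * 0 + (-(pdt (fun _ => -(1/2):ℝ × ℝ → ℝ) p) - 2 * v p * -(1/2)) = v p)
    ∧ (2 * u p * -(3 * u p) + pdt (fun _ => (0:ℝ)) p + (-(12 * u p ^ 2) - 2 * w p) * -(1/2) = w p)
    ∧ ((-(pdt (fun q => -(3 * u q)) p) + 2 * v p * -(3 * u p)) + (12 * u p ^ 2 + 2 * w p) * 0
        + (8 * u p * pdt (fun _ => -(1/2):ℝ × ℝ → ℝ) p + 4 * pdt u p * -(1/2)) = pdt u p - 6 * u p * v p) := by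
    intro p
    rw [pdt_neg3 u hu p, pdt_const, pdt_const]
    refine ⟨by ring, by ring, by ring⟩
  refine ⟨key, ⟨fun h p => ?_, fun h p => ?_⟩⟩
  · obtain ⟨k1, k2, k3⟩ := key p
    obtain ⟨h1, h2, h3⟩ := h p
    exact ⟨by rw [h1, k1], by rw [h2, k2], by rw [h3, k3]⟩
  · obtain ⟨k1, k2, k3⟩ := key p
    obtain ⟨h1, h2, h3⟩ := h p
    exact ⟨by rw [h1, k1], by rw [h2, k2], by rw [h3, k3]⟩
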